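/- Let n be a positive integer, 𝔸 a nonzero additive subgroup of (ℝ,+), and Y ⊆ X ⊆ ℚⁿ ⊆ ℝⁿ. Suppose the convex hull conv_ℝ(X) is a polyhedron, i.e., a finite intersection of closed half-spaces {v ∈ ℝⁿ : φᵢ(v) ≤ cᵢ} (φᵢ linear functionals on ℝⁿ, cᵢ ∈ ℝ). Then Y is a weak 𝔸-face of X if and only if Y = F ∩ X for some exposed face F of conv_ℝ(X), where the exposed faces of a convex set C ⊆ ℝⁿ are the empty set together with the sets {p ∈ C : φ(p) ≥ φ(q) for all q ∈ C} for linear functionals φ on ℝⁿ (including φ = 0, which yields C itself). In particular, a nonempty Y ⊆ X is a weak 𝔸-face of X if and only if Y = X(φ) for some linear functional φ on ℝⁿ. -/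

import Mathlib

open Finsupp

/-- `R₊ := R ∩ [0,∞)`. -/
def Rplus (R : Set ℝ) : Set ℝ := R ∩ Set.Ici 0

/-- `ℓ(f) := Σ_v f(v)`. -/
noncomputable def ell {V : Type*} [AddCommGroup V] [Module ℝ V] (f : V →₀ ℝ) : ℝ :=
  f.sum fun _ r => r

/-- `ℓ⃗(f) := Σ_v f(v) • v`. -/
noncomputable def vell {V : Type*} [AddCommGroup V] [Module ℝ V] (f : V →₀ ℝ) : V :=
  f.sum fun v r => r • v

/-- `f ∈ Fin(X,R)`: finitely supported, support in `X`, values in `R ∪ {0}`. -/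
def IsFinSupp {V : Type*} [AddCommGroup V] [Module ℝ V] (X : Set V) (R : Set ℝ)
    (f : V →₀ ℝ) : Prop :=
  ↑f.support ⊆ X ∧ ∀ v, f v ∈ R ∪ {0}

/-- `Y` is a weak `R`-face of `X`. -/
def IsWeakFace {V : Type*} [AddCommGroup V] [Module ℝ V] (X Y : Set V) (R : Set ℝ) : Prop :=
  ∀ f g : V →₀ ℝ, IsFinSupp X (Rplus R) f → IsFinSupp Y (Rplus R) g →
    ell f = ell g → 0 < ell g → vell f = vell g → ↑f.support ⊆ Y

/-- `Y` is a positive weak `R`-face of `X`. -/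
def IsPosWeakFace {V : Type*} [AddCommGroup V] [Module ℝ V] (X Y : Set V) (R : Set ℝ) : Prop :=
  ∀ f g : V →₀ ℝ, IsFinSupp X (Rplus R) f → IsFinSupp Y (Rplus R) g →
    vell f = vell g → ell g ≤ ell f ∧ (ell g = ell f ↔ ↑f.support ⊆ Y)

/-- `Y` is `(R',R)`-closed in `X`. -/
def IsRClosed {V : Type*} [AddCommGroup V] [Module ℝ V] (X Y : Set V) (R' R : Set ℝ) : Prop :=
  ∀ f g : V →₀ ℝ, IsFinSupp X R f → IsFinSupp Y R g →
    ell f = ell g → ell f ∈ R' → ell f ≠ 0 → vell f = vell g → ↑f.support ⊆ Y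

/-- The maximizer set `X(φ)`. -/
def maximizer {V : Type*} [AddCommGroup V] [Module ℝ V] (X : Set V) (φ : V →ₗ[ℝ] ℝ) : Set V :=
  {x | x ∈ X ∧ ∀ x' ∈ X, φ x' ≤ φ x}

/-! ### Auxiliary lemmas on `ell` and `vell` -/

section ellvell
variable {V : Type*} [AddCommGroup V] [Module ℝ V]

lemma ell_eq_lc (f : V →₀ ℝ) :
    ell f = Finsupp.linearCombination ℝ (fun _ : V => (1:ℝ)) f := by
  simp [ell, Finsupp.linearCombination_apply]

lemma vell_eq_lc (f : V →₀ ℝ) : vell f = Finsupp.linearCombination ℝ (id : V → V) f := by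
  simp [vell, Finsupp.linearCombination_apply]

lemma ell_add (f g : V →₀ ℝ) : ell (f + g) = ell f + ell g := by simp [ell_eq_lc]
lemma vell_add (f g : V →₀ ℝ) : vell (f + g) = vell f + vell g := by simp [vell_eq_lc]
lemma ell_smul (c : ℝ) (f : V →₀ ℝ) : ell (c • f) = c * ell f := by simp [ell_eq_lc]
lemma vell_smul (c : ℝ) (f : V →₀ ℝ) : vell (c • f) = c • vell f := by simp [vell_eq_lc]
lemma ell_single (v : V) (r : ℝ) : ell (single v r) = r := by simp [ell_eq_lc]
lemma vell_single (v : V) (r : ℝ) : vell (single v r) = r • v := by simp [vell_eq_lc]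
lemma ell_finset_sum {ι : Type*} (s : Finset ι) (f : ι → (V →₀ ℝ)) :
    ell (∑ i ∈ s, f i) = ∑ i ∈ s, ell (f i) := by simp [ell_eq_lc]
lemma vell_finset_sum {ι : Type*} (s : Finset ι) (f : ι → (V →₀ ℝ)) :
    vell (∑ i ∈ s, f i) = ∑ i ∈ s, vell (f i) := by simp [vell_eq_lc]

lemma map_vell (φ : V →ₗ[ℝ] ℝ) (f : V →₀ ℝ) :
    φ (vell f) = f.sum fun v r => r * φ v := by
  rw [vell, map_finsuppSum]; simp [smul_eq_mul]

lemma finsupp_nonneg {R : Set ℝ} {f : V →₀ ℝ} (hf : ∀ v, f v ∈ Rplus R ∪ {0}) (v : V) :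
    0 ≤ f v := by
  rcases hf v with h | h
  · exact h.2
  · simp at h; rw [h]

/-- Empty `Y` is a weak face. -/
lemma isWeakFace_empty (X : Set V) (R : Set ℝ) : IsWeakFace X ∅ R := by
  intro f g _ hg hfg hpos _
  exfalso
  have : g = 0 := by
    rw [← Finsupp.support_eq_empty]
    have := hg.1
    simpa [Set.subset_empty_iff] using this
  rw [this] at hpos
  simp [ell] at hpos

/-- If `Y = maximizer (convexHull ℝ X) φ ∩ X` then `Y` is a weak `R`-face of `X`. -/
lemma isWeakFace_of_maximizer (X Y : Set V) (R : Set ℝ) (φ : V →ₗ[ℝ] ℝ)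
    (hY : Y = maximizer (convexHull ℝ X) φ ∩ X) : IsWeakFace X Y R := by
  intro f g hf hg hℓ hpos hv
  have hgne : g ≠ 0 := by
    rintro rfl; simp [ell] at hpos
  obtain ⟨y₀, hy₀⟩ : ∃ y, y ∈ g.support := by
    rcases Finsupp.support_nonempty_iff.2 hgne with ⟨y, hy⟩; exact ⟨y, hy⟩
  have hy₀Y : y₀ ∈ Y := hg.1 hy₀
  have hy₀max : y₀ ∈ maximizer (convexHull ℝ X) φ := (hY ▸ hy₀Y).1
  set M := φ y₀ with hM
  have hXle : ∀ x ∈ X, φ x ≤ M := fun x hx => hy₀max.2 x (subset_convexHull ℝ X hx)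
  have hgM : ∀ v ∈ g.support, φ v = M := by
    intro v hv'
    have hvY : v ∈ Y := hg.1 hv'
    have hvmax := (hY ▸ hvY).1
    exact le_antisymm (hy₀max.2 v hvmax.1) (hvmax.2 y₀ hy₀max.1)
  have hφg : φ (vell g) = M * ell g := by
    rw [map_vell, ell, Finsupp.sum, Finsupp.sum, Finset.mul_sum]
    exact Finset.sum_congr rfl fun v hv' => by rw [hgM v hv']; ring
  have hφf : φ (vell f) = f.sum fun v r => r * φ v := map_vell φ f
  have key : ∑ v ∈ f.support, f v * (M - φ v) = 0 := by
    have : ∑ v ∈ f.support, f v * (M - φ v) = M * ell f - φ (vell f) := by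
      rw [hφf, ell, Finsupp.sum, Finsupp.sum, Finset.mul_sum, ← Finset.sum_sub_distrib]
      exact Finset.sum_congr rfl fun v _ => by ring
    rw [this, hv, hφg, hℓ]; ring
  have hterm : ∀ v ∈ f.support, 0 ≤ f v * (M - φ v) := by
    intro v hv'
    have h1 : 0 ≤ f v := finsupp_nonneg hf.2 v
    have h2 : φ v ≤ M := hXle v (hf.1 hv')
    nlinarith
  intro v hv'
  have hv'' : v ∈ f.support := hv'
  have hz : f v * (M - φ v) = 0 :=
    (Finset.sum_eq_zero_iff_of_nonneg hterm).1 key v hv''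
  have hfv : f v ≠ 0 := Finsupp.mem_support_iff.1 hv''
  have hφv : φ v = M := by
    have : M - φ v = 0 := by
      rcases mul_eq_zero.1 hz with h | h
      · exact absurd h hfv
      · exact h
    linarith
  have hvX : v ∈ X := hf.1 hv''
  rw [hY]
  refine ⟨⟨subset_convexHull ℝ X hvX, ?_⟩, hvX⟩
  intro q hq
  calc φ q ≤ M := hy₀max.2 q hq
    _ = φ v := hφv.symm

end ellvell

/-! ### Rational points -/

/-- a point of `ℝⁿ` with rational coordinates -/
def IsRatPt {n : ℕ} (x : Fin n → ℝ) : Prop := ∀ i, ∃ q : ℚ, x i = (q : ℝ)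

open Classical in
noncomputable def ratLift {n : ℕ} (x : Fin n → ℝ) : Fin n → ℚ :=
  fun i => if h : ∃ q : ℚ, x i = (q : ℝ) then h.choose else 0

lemma ratLift_spec {n : ℕ} {x : Fin n → ℝ} (hx : IsRatPt x) (i : Fin n) :
    ((ratLift x i : ℚ) : ℝ) = x i := by
  have h := hx i
  classical
  rw [ratLift]
  simp only [dif_pos h]
  exact h.choose_spec.symm

/-- `r` is a rational real. -/
def SRat (r : ℝ) : Prop := ∃ q : ℚ, r = (q : ℝ)

lemma SRat.add {a b : ℝ} (ha : SRat a) (hb : SRat b) : SRat (a + b) := by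
  obtain ⟨p, hp⟩ := ha; obtain ⟨q, hq⟩ := hb
  exact ⟨p + q, by rw [hp, hq]; push_cast; ring⟩

lemma SRat.mul {a b : ℝ} (ha : SRat a) (hb : SRat b) : SRat (a * b) := by
  obtain ⟨p, hp⟩ := ha; obtain ⟨q, hq⟩ := hb
  exact ⟨p * q, by rw [hp, hq]; push_cast; ring⟩

lemma SRat.sub {a b : ℝ} (ha : SRat a) (hb : SRat b) : SRat (a - b) := by
  obtain ⟨p, hp⟩ := ha; obtain ⟨q, hq⟩ := hb
  exact ⟨p - q, by rw [hp, hq]; push_cast; ring⟩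

lemma SRat.sum {ι : Type*} (s : Finset ι) (f : ι → ℝ) (h : ∀ i ∈ s, SRat (f i)) :
    SRat (∑ i ∈ s, f i) := by
  classical
  induction s using Finset.induction with
  | empty => exact ⟨0, by simp⟩
  | @insert _ _ hni ih =>
    rw [Finset.sum_insert hni]
    exact (h _ (Finset.mem_insert_self _ _)).add
      (ih fun i hi => h i (Finset.mem_insert_of_mem hi))

lemma IsRatPt.add {n : ℕ} {a b : Fin n → ℝ} (ha : IsRatPt a) (hb : IsRatPt b) :
    IsRatPt (a + b) := fun i => SRat.add (ha i) (hb i)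

lemma IsRatPt.sub {n : ℕ} {a b : Fin n → ℝ} (ha : IsRatPt a) (hb : IsRatPt b) :
    IsRatPt (a - b) := fun i => SRat.sub (ha i) (hb i)

lemma IsRatPt.smul {n : ℕ} {c : ℝ} (hc : SRat c) {a : Fin n → ℝ} (ha : IsRatPt a) :
    IsRatPt (c • a) := fun i => by
  have : (c • a) i = c * a i := rfl
  rw [this]; exact hc.mul (ha i)

lemma IsRatPt.sum {n : ℕ} {ι : Type*} (s : Finset ι) (f : ι → (Fin n → ℝ))
    (h : ∀ i ∈ s, IsRatPt (f i)) : IsRatPt (∑ i ∈ s, f i) := fun j => by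
  have : (∑ i ∈ s, f i) j = ∑ i ∈ s, f i j := by simp [Finset.sum_apply]
  rw [this]
  exact SRat.sum s (fun i => f i j) fun i hi => h i hi j

/-- Rational Carathéodory: a rational point in the real convex hull of a set of
rational points is a rational convex combination. -/
lemma ratCara {n : ℕ} (X : Set (Fin n → ℝ)) (hXQ : ∀ x ∈ X, IsRatPt x)
    {p : Fin n → ℝ} (hp : IsRatPt p) (hpc : p ∈ convexHull ℝ X) :
    ∃ γ : (Fin n → ℝ) →₀ ℝ, ↑γ.support ⊆ X ∧ (∀ v, 0 ≤ γ v) ∧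
      (∀ v, SRat (γ v)) ∧ ell γ = 1 ∧ vell γ = p := by
  classical
  rw [convexHull_eq_union] at hpc
  simp only [Set.mem_iUnion] at hpc
  obtain ⟨t, htX, hai, hpt⟩ := hpc
  rw [Finset.convexHull_eq] at hpt
  obtain ⟨w, hw0, hw1, hcm⟩ := hpt
  have hps : ∑ y ∈ t, w y • y = p := by
    rw [← hcm, Finset.centerMass_eq_of_sum_1 _ _ hw1]; rfl
  set v : ↥t → ((Fin n → ℚ) × ℚ) := fun y => (ratLift ↑y, 1) with hv
  have hyrat : ∀ y : ↥t, ∀ i, ((ratLift (↑y : Fin n → ℝ) i : ℚ) : ℝ) = (↑y : Fin n → ℝ) i :=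
    fun y i => ratLift_spec (hXQ _ (htX y.2)) i
  have hspan : ((ratLift p, 1) : (Fin n → ℚ) × ℚ) ∈ Submodule.span ℚ (Set.range v) := by
    by_contra hns
    obtain ⟨ψ, hψne, hψmap⟩ := Submodule.exists_dual_map_eq_bot_of_notMem hns inferInstance
    have hψ0 : ∀ y : ↥t, ψ (v y) = 0 := by
      intro y
      have : ψ (v y) ∈ Submodule.map ψ (Submodule.span ℚ (Set.range v)) :=
        Submodule.mem_map_of_mem (Submodule.subset_span ⟨y, rfl⟩)
      rw [hψmap] at this; rwa [Submodule.mem_bot] at this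
    set r : Fin n → ℚ := fun i => ψ (Pi.single i 1, 0) with hr
    set r' : ℚ := ψ (0, 1) with hr'
    have hexp : ∀ z : (Fin n → ℚ) × ℚ, ψ z = (∑ i, z.1 i * r i) + z.2 * r' := by
      intro z
      have hz : ψ z = ψ ((∑ i, z.1 i • ((Pi.single i 1 : Fin n → ℚ), (0:ℚ)))
          + z.2 • ((0 : Fin n → ℚ), (1:ℚ))) := by
        congr 1
        ext j
        · simp [Prod.fst_sum, Finset.sum_apply, Pi.single_apply]
        · simp [Prod.snd_sum]
      rw [hz, map_add, map_sum]
      simp only [map_smul, smul_eq_mul]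
      rfl
    have hA : ∀ y : ↥t, (∑ i, (↑y : Fin n → ℝ) i * ((r i : ℚ) : ℝ)) + ((r' : ℚ) : ℝ) = 0 := by
      intro y
      have h0 := hψ0 y
      rw [hexp] at h0
      have hcast : ((((∑ i, (v y).1 i * r i) + (v y).2 * r' : ℚ)) : ℝ) = 0 := by
        rw [h0]; exact Rat.cast_zero
      push_cast at hcast
      calc (∑ i, (↑y : Fin n → ℝ) i * ((r i : ℚ) : ℝ)) + ((r' : ℚ) : ℝ)
          = (∑ i, ((ratLift (↑y : Fin n → ℝ) i : ℚ) : ℝ) * ((r i : ℚ) : ℝ)) + 1 * ((r' : ℚ) : ℝ) := by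
            rw [one_mul]
            congr 1
            exact Finset.sum_congr rfl fun i _ => by rw [hyrat y i]
        _ = 0 := by simpa [hv] using hcast
    have hB : (∑ i, p i * ((r i : ℚ) : ℝ)) + ((r' : ℚ) : ℝ) ≠ 0 := by
      intro hcon
      apply hψne
      rw [hexp]
      have hcast : ((((∑ i, (ratLift p) i * r i) + 1 * r' : ℚ)) : ℝ) = 0 := by
        push_cast
        rw [one_mul]
        calc (∑ i, ((ratLift p i : ℚ) : ℝ) * ((r i : ℚ) : ℝ)) + ((r' : ℚ) : ℝ)
            = (∑ i, p i * ((r i : ℚ) : ℝ)) + ((r' : ℚ) : ℝ) := by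
              congr 1
              exact Finset.sum_congr rfl fun i _ => by rw [ratLift_spec hp i]
          _ = 0 := hcon
      have := (Rat.cast_eq_zero (α := ℝ)).1 hcast
      simpa using this
    apply hB
    have hpi : ∀ i, p i = ∑ y ∈ t, w y * y i := by
      intro i
      rw [← hps]
      simp [Finset.sum_apply]
    have h1 : (∑ i, p i * ((r i : ℚ) : ℝ)) = ∑ y ∈ t, w y * (∑ i, y i * ((r i : ℚ) : ℝ)) :=
      calc (∑ i, p i * ((r i : ℚ) : ℝ))
          = ∑ i, ∑ y ∈ t, w y * y i * ((r i : ℚ) : ℝ) := by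
            refine Finset.sum_congr rfl fun i _ => ?_
            rw [hpi i, Finset.sum_mul]
        _ = ∑ y ∈ t, ∑ i, w y * y i * ((r i : ℚ) : ℝ) := Finset.sum_comm
        _ = ∑ y ∈ t, w y * (∑ i, y i * ((r i : ℚ) : ℝ)) := by
            refine Finset.sum_congr rfl fun y _ => ?_
            rw [Finset.mul_sum]
            exact Finset.sum_congr rfl fun i _ => by ring
    have h2 : ((r' : ℚ) : ℝ) = ∑ y ∈ t, w y * ((r' : ℚ) : ℝ) := by
      rw [← Finset.sum_mul, hw1, one_mul]
    rw [h1, h2, ← Finset.sum_add_distrib]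
    refine Finset.sum_eq_zero fun y hy => ?_
    have := hA ⟨y, hy⟩
    calc w y * (∑ i, y i * ((r i : ℚ) : ℝ)) + w y * ((r' : ℚ) : ℝ)
        = w y * ((∑ i, y i * ((r i : ℚ) : ℝ)) + ((r' : ℚ) : ℝ)) := by ring
      _ = 0 := by rw [this, mul_zero]
  rw [mem_span_range_iff_exists_finsupp] at hspan
  obtain ⟨c, hc⟩ := hspan
  have hc1 : ∑ y : ↥t, c y • v y = ((ratLift p, 1) : (Fin n → ℚ) × ℚ) := by
    rw [← hc]
    exact (Finsupp.sum_fintype c (fun y a => a • v y) (fun _ => zero_smul _ _)).symm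
  have hfst : ∑ y : ↥t, c y • ratLift (↑y : Fin n → ℝ) = ratLift p := by
    have h := congrArg Prod.fst hc1
    simpa [Prod.fst_sum, hv] using h
  have hsnd : ∑ y : ↥t, c y = 1 := by
    have h := congrArg Prod.snd hc1
    simpa [Prod.snd_sum, hv] using h
  have hfstR : ∀ i, ∑ y : ↥t, ((c y : ℚ) : ℝ) * (↑y : Fin n → ℝ) i = p i := by
    intro i
    have h := congrFun hfst i
    have hq : ∑ y : ↥t, c y * ratLift (↑y : Fin n → ℝ) i = ratLift p i := by
      simpa [Finset.sum_apply] using h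
    calc ∑ y : ↥t, ((c y : ℚ) : ℝ) * (↑y : Fin n → ℝ) i
        = ∑ y : ↥t, ((c y : ℚ) : ℝ) * ((ratLift (↑y : Fin n → ℝ) i : ℚ) : ℝ) := by
          exact Finset.sum_congr rfl fun y _ => by rw [hyrat y i]
      _ = ((∑ y : ↥t, c y * ratLift (↑y : Fin n → ℝ) i : ℚ) : ℝ) := by push_cast; rfl
      _ = ((ratLift p i : ℚ) : ℝ) := by rw [hq]
      _ = p i := ratLift_spec hp i
  have hsndR : ∑ y : ↥t, ((c y : ℚ) : ℝ) = 1 := by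
    have : ((∑ y : ↥t, c y : ℚ) : ℝ) = 1 := by rw [hsnd]; exact Rat.cast_one
    rw [← this]; push_cast; rfl
  have hcsum : ∑ y : ↥t, ((c y : ℚ) : ℝ) • (↑y : Fin n → ℝ) = p := by
    ext i
    simpa [Finset.sum_apply] using hfstR i
  have hwsum : ∑ y : ↥t, w ↑y • (↑y : Fin n → ℝ) = p := by
    rw [← hps]
    exact Finset.sum_coe_sort t (fun y => w y • y)
  have hweq : ∀ y : ↥t, w ↑y = ((c y : ℚ) : ℝ) := by
    set w' : ↥t → ℝ := fun y => w ↑y - ((c y : ℚ) : ℝ) with hw'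
    have hsum0 : ∑ y : ↥t, w' y = 0 := by
      simp only [hw', Finset.sum_sub_distrib]
      rw [Finset.sum_coe_sort t w, hw1, hsndR]; ring
    have hvsub : (Finset.univ.weightedVSub (Subtype.val : ↥t → (Fin n → ℝ))) w' = 0 := by
      rw [Finset.weightedVSub_eq_linear_combination _ hsum0]
      simp only [hw', sub_smul, Finset.sum_sub_distrib]
      rw [hwsum, hcsum, sub_self]
    intro y
    have := (affineIndependent_iff_of_fintype ℝ _).1 hai w' hsum0 hvsub y
    simpa [hw', sub_eq_zero] using this
  refine ⟨∑ y ∈ t, single y (w y), ?_, ?_, ?_, ?_, ?_⟩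
  · intro u hu
    simp only [Finset.mem_coe, Finsupp.mem_support_iff] at hu
    by_contra hux
    apply hu
    rw [Finsupp.finset_sum_apply]
    refine Finset.sum_eq_zero fun y hy => ?_
    rw [Finsupp.single_apply, if_neg]
    rintro rfl
    exact hux (htX hy)
  · intro u
    rw [Finsupp.finset_sum_apply]
    simp only [Finsupp.single_apply]
    rw [Finset.sum_ite_eq' t u w]
    split
    · exact hw0 u ‹_›
    · exact le_refl 0
  · intro u
    rw [Finsupp.finset_sum_apply]
    simp only [Finsupp.single_apply]
    rw [Finset.sum_ite_eq' t u w]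
    split
    · exact ⟨c ⟨u, ‹_›⟩, hweq ⟨u, ‹_›⟩⟩
    · exact ⟨0, by simp⟩
  · rw [ell_finset_sum]
    simp only [ell_single]
    exact hw1
  · rw [vell_finset_sum]
    simp only [vell_single]
    exact hps
/-! ### Scaling rational data into `𝔸` -/

lemma exists_pos_elt (𝔸 : AddSubgroup ℝ) (h𝔸 : 𝔸 ≠ ⊥) : ∃ a ∈ 𝔸, 0 < a := by
  have hb : ∃ b ∈ 𝔸, b ≠ 0 := by
    by_contra hc
    push_neg at hc
    exact h𝔸 ((AddSubgroup.eq_bot_iff_forall 𝔸).2 hc)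
  obtain ⟨b, hb𝔸, hbne⟩ := hb
  rcases lt_or_gt_of_ne hbne with h | h
  · exact ⟨-b, AddSubgroup.neg_mem 𝔸 hb𝔸, by linarith⟩
  · exact ⟨b, hb𝔸, h⟩

lemma exists_denom {V : Type*} [AddCommGroup V] [Module ℝ V] (f : V →₀ ℝ)
    (hf : ∀ v, SRat (f v)) : ∃ N : ℕ, 0 < N ∧ ∀ v, ∃ z : ℤ, (N : ℝ) * f v = (z : ℝ) := by
  classical
  choose Q hQ using hf
  refine ⟨∏ v ∈ f.support, (Q v).den, Finset.prod_pos fun v _ => (Q v).pos, ?_⟩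
  intro v
  by_cases hv : v ∈ f.support
  · obtain ⟨m, hm⟩ := Finset.dvd_prod_of_mem (fun v => (Q v).den) hv
    refine ⟨m * (Q v).num, ?_⟩
    have hqq : ((∏ u ∈ f.support, (Q u).den : ℕ) : ℚ) * Q v = ((m : ℤ) * (Q v).num : ℤ) := by
      rw [hm]
      push_cast
      rw [mul_comm ((Q v).den : ℚ) (m : ℚ), mul_assoc]
      rw [mul_comm ((Q v).den : ℚ) (Q v), Rat.mul_den_eq_num]
    calc ((∏ u ∈ f.support, (Q u).den : ℕ) : ℝ) * f v
        = ((((∏ u ∈ f.support, (Q u).den : ℕ) : ℚ) * Q v : ℚ) : ℝ) := by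
          rw [hQ v]; push_cast; ring
      _ = (((m : ℤ) * (Q v).num : ℤ) : ℝ) := by rw [hqq]; push_cast; ring
  · refine ⟨0, ?_⟩
    have : f v = 0 := Finsupp.notMem_support_iff.1 hv
    rw [this]; simp

/-- The weak-face property applied to rational-valued data. -/
lemma weakFace_rat {V : Type*} [AddCommGroup V] [Module ℝ V] [NoZeroSMulDivisors ℝ V]
    (X Y : Set V) (𝔸 : AddSubgroup ℝ) (h𝔸 : 𝔸 ≠ ⊥)
    (hwf : IsWeakFace X Y (𝔸 : Set ℝ)) (f g : V →₀ ℝ)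
    (hfX : ↑f.support ⊆ X) (hf0 : ∀ v, 0 ≤ f v) (hfq : ∀ v, SRat (f v))
    (hgY : ↑g.support ⊆ Y) (hg0 : ∀ v, 0 ≤ g v) (hgq : ∀ v, SRat (g v))
    (hl : ell f = ell g) (hpos : 0 < ell g) (hv : vell f = vell g) :
    ↑f.support ⊆ Y := by
  obtain ⟨a, ha𝔸, hapos⟩ := exists_pos_elt 𝔸 h𝔸
  obtain ⟨Nf, hNfpos, hNf⟩ := exists_denom f hfq
  obtain ⟨Ng, hNgpos, hNg⟩ := exists_denom g hgq
  set N : ℕ := Nf * Ng with hN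
  have hNint : ∀ (h : V →₀ ℝ), (∀ v, ∃ z : ℤ, ((Nf : ℝ) * h v = z) ∨ ((Ng : ℝ) * h v = z)) →
      True := fun _ _ => trivial
  have hNf' : ∀ v, ∃ z : ℤ, (N : ℝ) * f v = (z : ℝ) := by
    intro v
    obtain ⟨z, hz⟩ := hNf v
    refine ⟨Ng * z, ?_⟩
    have : ((N : ℕ) : ℝ) = (Ng : ℝ) * (Nf : ℝ) := by rw [hN]; push_cast; ring
    rw [this, mul_assoc, hz]; push_cast; ring
  have hNg' : ∀ v, ∃ z : ℤ, (N : ℝ) * g v = (z : ℝ) := by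
    intro v
    obtain ⟨z, hz⟩ := hNg v
    refine ⟨Nf * z, ?_⟩
    have : ((N : ℕ) : ℝ) = (Nf : ℝ) * (Ng : ℝ) := by rw [hN]; push_cast; ring
    rw [this, mul_assoc, hz]; push_cast; ring
  set cst : ℝ := (N : ℝ) * a with hcst
  have hcstpos : 0 < cst := by
    have : (0:ℝ) < (N:ℝ) := by
      have : 0 < N := Nat.mul_pos hNfpos hNgpos
      exact_mod_cast this
    exact mul_pos this hapos
  have hsupp : ∀ h : V →₀ ℝ, (cst • h).support = h.support :=
    fun h => Finsupp.support_smul_eq (ne_of_gt hcstpos)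
  have hfin : ∀ (h : V →₀ ℝ) (S : Set V), ↑h.support ⊆ S → (∀ v, 0 ≤ h v) →
      (∀ v, ∃ z : ℤ, (N : ℝ) * h v = (z : ℝ)) → IsFinSupp S (Rplus ↑𝔸) (cst • h) := by
    intro h S hS h0 hint
    constructor
    · rw [hsupp h]; exact hS
    · intro v
      have happ : (cst • h) v = cst * h v := by simp [smul_eq_mul]
      by_cases hv0 : h v = 0
      · right; simp [happ, hv0]
      · left
        obtain ⟨z, hz⟩ := hint v
        have heq : cst * h v = (z : ℝ) * a := by
          rw [hcst]
          calc (N : ℝ) * a * h v = ((N : ℝ) * h v) * a := by ring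
            _ = (z : ℝ) * a := by rw [hz]
        constructor
        · rw [happ, heq]
          have := AddSubgroup.zsmul_mem 𝔸 ha𝔸 z
          rwa [zsmul_eq_mul] at this
        · rw [happ]
          exact Set.mem_Ici.2 (mul_nonneg (le_of_lt hcstpos) (h0 v))
  have happly := hwf (cst • f) (cst • g) (hfin f X hfX hf0 hNf') (hfin g Y hgY hg0 hNg')
    (by rw [ell_smul, ell_smul, hl]) (by rw [ell_smul]; exact mul_pos hcstpos hpos)
    (by rw [vell_smul, vell_smul, hv])
  rwa [hsupp f] at happly
/-! ### The hard direction -/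

lemma hard_direction {n : ℕ} (𝔸 : AddSubgroup ℝ) (h𝔸 : 𝔸 ≠ ⊥)
    (X Y : Set (Fin n → ℝ)) (hYX : Y ⊆ X)
    (hXQ : ∀ x ∈ X, IsRatPt x)
    {m : ℕ} {φs : Fin m → ((Fin n → ℝ) →ₗ[ℝ] ℝ)} {cs : Fin m → ℝ}
    (hpoly : convexHull ℝ X = ⋂ i : Fin m, {v : Fin n → ℝ | φs i v ≤ cs i})
    (hYne : Y.Nonempty) (hwf : IsWeakFace X Y (𝔸 : Set ℝ)) :
    ∃ φ : (Fin n → ℝ) →ₗ[ℝ] ℝ, Y = maximizer X φ := by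
  classical
  obtain ⟨y₀, hy₀⟩ := hYne
  have hXC : ∀ x ∈ X, ∀ i, φs i x ≤ cs i := by
    intro x hx i
    have hmem : x ∈ convexHull ℝ X := subset_convexHull ℝ X hx
    rw [hpoly] at hmem
    exact Set.mem_iInter.1 hmem i
  set I : Finset (Fin m) := Finset.univ.filter (fun i => ∀ y ∈ Y, φs i y = cs i) with hI
  set φ : (Fin n → ℝ) →ₗ[ℝ] ℝ := ∑ i ∈ I, φs i with hφ
  have hφapp : ∀ u, φ u = ∑ i ∈ I, φs i u := by
    intro u; rw [hφ]; simp [LinearMap.coe_sum, Finset.sum_apply]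
  have hφval : ∀ y ∈ Y, φ y = ∑ i ∈ I, cs i := by
    intro y hy; rw [hφapp]
    exact Finset.sum_congr rfl fun i hi => (Finset.mem_filter.1 hi).2 y hy
  have hφle : ∀ x ∈ X, φ x ≤ ∑ i ∈ I, cs i := by
    intro x hx; rw [hφapp]
    exact Finset.sum_le_sum fun i _ => hXC x hx i
  refine ⟨φ, Set.Subset.antisymm ?_ ?_⟩
  · intro y hy
    exact ⟨hYX hy, fun x' hx' => (hφle x' hx').trans (hφval y hy).ge⟩
  · intro x hx
    obtain ⟨hxX, hxmax⟩ := hx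
    have hφx : φ x = ∑ i ∈ I, cs i :=
      le_antisymm (hφle x hxX) ((hφval y₀ hy₀) ▸ hxmax y₀ (hYX hy₀))
    have hxI : ∀ i ∈ I, φs i x = cs i := by
      intro i hi
      by_contra hne
      have hlt : φs i x < cs i := lt_of_le_of_ne (hXC x hxX i) hne
      have : φ x < ∑ i ∈ I, cs i := by
        rw [hφapp]
        exact Finset.sum_lt_sum (fun j _ => hXC x hxX j) ⟨i, hi, hlt⟩
      exact absurd hφx (ne_of_lt this)
    -- choose witnesses
    have hwit : ∀ i : Fin m, ∃ y, y ∈ Y ∧ (i ∉ I → φs i y < cs i) := by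
      intro i
      by_cases hi : i ∈ I
      · exact ⟨y₀, hy₀, fun h => absurd hi h⟩
      · have hex : ∃ y ∈ Y, φs i y ≠ cs i := by
          by_contra hall
          push_neg at hall
          exact hi (Finset.mem_filter.2 ⟨Finset.mem_univ i, hall⟩)
        obtain ⟨y, hyY, hyne⟩ := hex
        exact ⟨y, hyY, fun _ => lt_of_le_of_ne (hXC y (hYX hyY) i) hyne⟩
    choose yw hywY hywlt using hwit
    set Nr : ℝ := ((m + 1 : ℕ) : ℝ) with hNr
    have hNrpos : (0:ℝ) < Nr := by rw [hNr]; exact_mod_cast Nat.succ_pos m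
    set P : Fin n → ℝ := Nr⁻¹ • (y₀ + ∑ i, yw i) with hP
    have hφsP : ∀ j, φs j P = Nr⁻¹ * (φs j y₀ + ∑ i, φs j (yw i)) := by
      intro j
      rw [hP, map_smul, map_add, map_sum]
      simp [smul_eq_mul]
    have hPI : ∀ j ∈ I, φs j P = cs j := by
      intro j hj
      have hjY : ∀ y ∈ Y, φs j y = cs j := (Finset.mem_filter.1 hj).2
      rw [hφsP j, hjY y₀ hy₀]
      have : ∑ i, φs j (yw i) = ∑ i : Fin m, cs j :=
        Finset.sum_congr rfl fun i _ => hjY (yw i) (hywY i)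
      rw [this, Finset.sum_const, Finset.card_univ, Fintype.card_fin]
      rw [hNr]
      push_cast
      field_simp
      ring
    have hPlt : ∀ j ∉ I, φs j P < cs j := by
      intro j hj
      rw [hφsP j]
      have h1 : φs j y₀ ≤ cs j := hXC y₀ (hYX hy₀) j
      have h2 : ∑ i, φs j (yw i) < ∑ i : Fin m, cs j :=
        Finset.sum_lt_sum (fun i _ => hXC (yw i) (hYX (hywY i)) j) ⟨j, Finset.mem_univ j, hywlt j hj⟩
      rw [Finset.sum_const, Finset.card_univ, Fintype.card_fin, nsmul_eq_mul] at h2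
      have hlt : φs j y₀ + ∑ i, φs j (yw i) < Nr * cs j := by
        rw [hNr]; push_cast; nlinarith
      calc Nr⁻¹ * (φs j y₀ + ∑ i, φs j (yw i)) < Nr⁻¹ * (Nr * cs j) := by
            exact mul_lt_mul_of_pos_left hlt (inv_pos.2 hNrpos)
        _ = cs j := by field_simp
    -- rationality of P and x
    have hxrat : IsRatPt x := hXQ x hxX
    have hPrat : IsRatPt P := by
      have hsum : IsRatPt (y₀ + ∑ i, yw i) :=
        (hXQ y₀ (hYX hy₀)).add (IsRatPt.sum _ _ fun i _ => hXQ _ (hYX (hywY i)))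
      have : SRat (Nr⁻¹) := ⟨((m+1 : ℕ) : ℚ)⁻¹, by rw [hNr]; push_cast; ring⟩
      exact IsRatPt.smul this hsum
    -- choose rational ε
    set E : Fin m → ℝ := fun j => if j ∈ I then 1 else (cs j - φs j P) / (|φs j P - φs j x| + 1)
      with hE
    have hEpos : ∀ j, 0 < E j := by
      intro j
      rw [hE]
      dsimp only
      split
      · exact one_pos
      · exact div_pos (sub_pos.2 (hPlt j ‹_›)) (by positivity)
    set ε₀ : ℝ := if h : (Finset.univ : Finset (Fin m)).Nonempty
        then min 1 (Finset.univ.inf' h E) else 1 with hε₀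
    have hε₀pos : 0 < ε₀ := by
      rw [hε₀]
      split
      · exact lt_min one_pos ((Finset.lt_inf'_iff _).2 fun j _ => hEpos j)
      · exact one_pos
    have hε₀le : ∀ j, ε₀ ≤ E j := by
      intro j
      rw [hε₀]
      rw [dif_pos ⟨j, Finset.mem_univ j⟩]
      exact (min_le_right _ _).trans (Finset.inf'_le E (Finset.mem_univ j))
    obtain ⟨εq, hεq0, hεqlt⟩ := exists_rat_btwn hε₀pos
    set ε : ℝ := (εq : ℝ) with hεdef
    have hεpos : 0 < ε := hεq0
    have hεE : ∀ j, ε < E j := fun j => hεqlt.trans_le (hε₀le j)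
    -- the point Q
    set Qp : Fin n → ℝ := P + ε • (P - x) with hQp
    have hφsQp : ∀ j, φs j Qp = φs j P + ε * (φs j P - φs j x) := by
      intro j
      simp only [hQp, map_add, map_smul, map_sub, smul_eq_mul]
    have hQpC : Qp ∈ convexHull ℝ X := by
      rw [hpoly]
      refine Set.mem_iInter.2 fun j => ?_
      show φs j Qp ≤ cs j
      rw [hφsQp j]
      by_cases hj : j ∈ I
      · rw [hPI j hj, hxI j hj]
        simp
      · have hEj : E j = (cs j - φs j P) / (|φs j P - φs j x| + 1) := by
          rw [hE]; exact if_neg hj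
        have hd : φs j P - φs j x ≤ |φs j P - φs j x| := le_abs_self _
        have habs : (0:ℝ) ≤ |φs j P - φs j x| := abs_nonneg _
        have hεlt : ε < (cs j - φs j P) / (|φs j P - φs j x| + 1) := hEj ▸ hεE j
        have hmul : ε * (|φs j P - φs j x| + 1) < cs j - φs j P := by
          have hpos' : (0:ℝ) < |φs j P - φs j x| + 1 := by positivity
          calc ε * (|φs j P - φs j x| + 1)
              < ((cs j - φs j P) / (|φs j P - φs j x| + 1)) * (|φs j P - φs j x| + 1) :=
                mul_lt_mul_of_pos_right hεlt hpos'
            _ = cs j - φs j P := div_mul_cancel₀ _ (ne_of_gt hpos')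
        nlinarith
    have hQprat : IsRatPt Qp := hPrat.add (IsRatPt.smul ⟨εq, rfl⟩ (hPrat.sub hxrat))
    -- rational Carathéodory for Qp
    obtain ⟨γ, hγX, hγ0, hγq, hγell, hγvell⟩ := ratCara X hXQ hQprat hQpC
    -- build f and g
    set f : (Fin n → ℝ) →₀ ℝ := γ + Finsupp.single x ε with hf
    set g : (Fin n → ℝ) →₀ ℝ := ((1 + ε) / Nr) •
        (Finsupp.single y₀ 1 + ∑ i, Finsupp.single (yw i) 1) with hg
    have hfX : ↑f.support ⊆ X := by
      rw [hf]
      refine Set.Subset.trans (Finset.coe_subset.2 Finsupp.support_add) ?_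
      rw [Finset.coe_union]
      refine Set.union_subset hγX ?_
      refine Set.Subset.trans (Finset.coe_subset.2 Finsupp.support_single_subset) ?_
      simp [hxX]
    have hfapp : ∀ v, f v = γ v + (if x = v then ε else 0) := by
      intro v; rw [hf]; simp [Finsupp.single_apply]
    have hf0 : ∀ v, 0 ≤ f v := by
      intro v; rw [hfapp]
      have := hγ0 v
      split <;> [linarith; linarith]
    have hfq : ∀ v, SRat (f v) := by
      intro v; rw [hfapp]
      refine (hγq v).add ?_
      split
      · exact ⟨εq, rfl⟩
      · exact ⟨0, by simp⟩
    have hgsupp : ↑g.support ⊆ Y := by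
      rw [hg]
      refine Set.Subset.trans (Finset.coe_subset.2 (Finsupp.support_smul)) ?_
      refine Set.Subset.trans (Finset.coe_subset.2 Finsupp.support_add) ?_
      rw [Finset.coe_union]
      refine Set.union_subset ?_ ?_
      · refine Set.Subset.trans (Finset.coe_subset.2 Finsupp.support_single_subset) ?_
        simp [hy₀]
      · refine Set.Subset.trans (Finset.coe_subset.2 (Finsupp.support_finset_sum)) ?_
        rw [Finset.coe_biUnion]
        refine Set.iUnion₂_subset fun i _ => ?_
        refine Set.Subset.trans (Finset.coe_subset.2 Finsupp.support_single_subset) ?_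
        simp [hywY i]
    have hgapp : ∀ v, g v = ((1 + ε) / Nr) *
        ((if y₀ = v then (1:ℝ) else 0) + ∑ i, (if yw i = v then (1:ℝ) else 0)) := by
      intro v
      rw [hg]
      simp only [Finsupp.coe_smul, Finsupp.coe_add, Pi.smul_apply, Pi.add_apply,
        Finsupp.single_apply, Finset.sum_apply', smul_eq_mul]
    have hg0 : ∀ v, 0 ≤ g v := by
      intro v
      rw [hgapp]
      have h2 : (0:ℝ) ≤ (if y₀ = v then (1:ℝ) else 0) := by split <;> norm_num
      have h3 : (0:ℝ) ≤ ∑ i, (if yw i = v then (1:ℝ) else 0) :=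
        Finset.sum_nonneg fun i _ => by split <;> norm_num
      exact mul_nonneg (by positivity) (add_nonneg h2 h3)
    have hgq : ∀ v, SRat (g v) := by
      intro v
      rw [hgapp]
      refine SRat.mul ?_ (SRat.add ?_ (SRat.sum _ _ fun i _ => ?_))
      · exact ⟨(1 + εq) / ((m+1:ℕ) : ℚ), by rw [hNr]; push_cast; ring⟩
      · split
        exacts [⟨1, by norm_num⟩, ⟨0, by norm_num⟩]
      · split
        exacts [⟨1, by norm_num⟩, ⟨0, by norm_num⟩]
    have hellf : ell f = 1 + ε := by
      rw [hf, ell_add, ell_single, hγell]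
    have hellg : ell g = 1 + ε := by
      rw [hg, ell_smul, ell_add, ell_single, ell_finset_sum]
      simp only [ell_single]
      rw [Finset.sum_const, Finset.card_univ, Fintype.card_fin, nsmul_eq_mul, mul_one]
      have hone : (1:ℝ) + (m:ℝ) = Nr := by rw [hNr]; push_cast; ring
      rw [hone]
      exact div_mul_cancel₀ _ (ne_of_gt hNrpos)
    have hvellf : vell f = (1 + ε) • P := by
      rw [hf, vell_add, vell_single, hγvell, hQp]
      module
    have hvellg : vell g = (1 + ε) • P := by
      rw [hg, vell_smul, vell_add, vell_single, vell_finset_sum]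
      simp only [vell_single, one_smul]
      rw [hP, smul_smul, div_eq_mul_inv]
    have hsub := weakFace_rat X Y 𝔸 h𝔸 hwf f g hfX hf0 hfq hgsupp hg0 hgq
      (by rw [hellf, hellg]) (by rw [hellg]; positivity) (by rw [hvellf, hvellg])
    have hxf : x ∈ f.support := by
      rw [Finsupp.mem_support_iff]
      have h := hγ0 x
      have hfx : f x = γ x + ε := by rw [hfapp]; simp
      rw [hfx]
      intro hcon
      linarith
    exact hsub hxf
/-! ### Conversion between maximizer over `X` and over the hull -/

lemma maximizer_conv {V : Type*} [AddCommGroup V] [Module ℝ V] (X : Set V)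
    (φ : V →ₗ[ℝ] ℝ) (hne : (maximizer X φ).Nonempty) :
    maximizer X φ = maximizer (convexHull ℝ X) φ ∩ X := by
  ext x
  constructor
  · rintro ⟨hxX, hxmax⟩
    refine ⟨⟨subset_convexHull ℝ X hxX, ?_⟩, hxX⟩
    intro p hp
    have hsub : convexHull ℝ X ⊆ {v | φ v ≤ φ x} :=
      convexHull_min (fun u hu => hxmax u hu) (convex_halfSpace_le φ.isLinear (φ x))
    exact hsub hp
  · rintro ⟨⟨hxC, hxmax⟩, hxX⟩
    exact ⟨hxX, fun u hu => hxmax u (subset_convexHull ℝ X hu)⟩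

/-- Let `Y ⊆ X ⊆ ℚⁿ ⊆ ℝⁿ` with `conv_ℝ(X)` a polyhedron (a finite
intersection of closed half-spaces), and `𝔸 ⊆ ℝ` a nonzero additive subgroup. Then
`Y` is a weak `𝔸`-face of `X` iff `Y = F ∩ X` for some exposed face `F` of `conv_ℝ(X)`;
in particular, a nonempty `Y` is a weak `𝔸`-face of `X` iff `Y = X(φ)` for some linear
functional `φ`. -/
theorem statement12 (n : ℕ) (hn : 0 < n) (𝔸 : AddSubgroup ℝ) (h𝔸 : 𝔸 ≠ ⊥)
    (X Y : Set (Fin n → ℝ)) (hYX : Y ⊆ X)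
    (hXQ : ∀ x ∈ X, ∀ i : Fin n, ∃ q : ℚ, x i = (q : ℝ))
    (hpoly : ∃ (m : ℕ) (φ : Fin m → ((Fin n → ℝ) →ₗ[ℝ] ℝ)) (c : Fin m → ℝ),
      convexHull ℝ X = ⋂ i : Fin m, {v : Fin n → ℝ | φ i v ≤ c i}) :
    (IsWeakFace X Y (𝔸 : Set ℝ) ↔
      ∃ F : Set (Fin n → ℝ),
        (F = ∅ ∨ ∃ φ : (Fin n → ℝ) →ₗ[ℝ] ℝ, F = maximizer (convexHull ℝ X) φ) ∧
        Y = F ∩ X) ∧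
    (Y.Nonempty →
      (IsWeakFace X Y (𝔸 : Set ℝ) ↔
        ∃ φ : (Fin n → ℝ) →ₗ[ℝ] ℝ, Y = maximizer X φ)) := by
  have hXQ' : ∀ x ∈ X, IsRatPt x := fun x hx => hXQ x hx
  constructor
  · constructor
    · intro hwf
      rcases Set.eq_empty_or_nonempty Y with hY | hYne
      · exact ⟨∅, Or.inl rfl, by rw [hY]; simp⟩
      · obtain ⟨m, φs, cs, hp⟩ := hpoly
        obtain ⟨φ, hφ⟩ := hard_direction 𝔸 h𝔸 X Y hYX hXQ' hp hYne hwf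
        refine ⟨maximizer (convexHull ℝ X) φ, Or.inr ⟨φ, rfl⟩, ?_⟩
        rw [hφ]
        exact maximizer_conv X φ (hφ ▸ hYne)
    · rintro ⟨F, hFor, hYF⟩
      rcases hFor with hF | ⟨φ, rfl⟩
      · subst hF
        have : Y = ∅ := by rw [hYF]; simp
        rw [this]
        exact isWeakFace_empty X _
      · exact isWeakFace_of_maximizer X Y _ φ hYF
  · intro hYne
    constructor
    · intro hwf
      obtain ⟨m, φs, cs, hp⟩ := hpoly
      exact hard_direction 𝔸 h𝔸 X Y hYX hXQ' hp hYne hwf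
    · rintro ⟨φ, hφ⟩
      apply isWeakFace_of_maximizer X Y _ φ
      rw [hφ]
      exact maximizer_conv X φ (hφ ▸ hYne)
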